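/- For all a, b, c ∈ k^×, one has ⟨c⟩·(t_a + t_b) = t_{ac} + t_{bc} in W. In particular, ⟨a⟩·t_a = t_a and ⟨a⟩·t_b + ⟨b⟩·t_a = t_a + t_b for all a, b ∈ k^×. Here t_c := ⟨2⟩ + ⟨c⟩ − ⟨1⟩ − ⟨2c⟩. -/
import Mathlib


noncomputable section

/-- The ideal `R` of relations in the group ring `ℤ[k^×]`: generated by the elements
`⟨a⟩ − ⟨ab²⟩` for `a, b ∈ k^×`, and `⟨a⟩ + ⟨b⟩ − ⟨a+b⟩ − ⟨(a+b)ab⟩` for `a, b ∈ k^×`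
with `a + b ≠ 0` (the condition `a + b ≠ 0` being encoded by the existence of a unit
`c` with value `a + b`). -/
def GWIdeal (k : Type*) [Field k] : Ideal (MonoidAlgebra ℤ kˣ) :=
  Ideal.span
    ({x | ∃ a b : kˣ, x = MonoidAlgebra.of ℤ kˣ a - MonoidAlgebra.of ℤ kˣ (a * b ^ 2)} ∪
     {x | ∃ a b c : kˣ, (c : k) = (a : k) + (b : k) ∧
        x = MonoidAlgebra.of ℤ kˣ a + MonoidAlgebra.of ℤ kˣ b
            - MonoidAlgebra.of ℤ kˣ c - MonoidAlgebra.of ℤ kˣ (c * a * b)})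

/-- The Grothendieck–Witt ring of `k`, presented (Lam) as `ℤ[k^×]/R`. -/
abbrev GW (k : Type*) [Field k] := MonoidAlgebra ℤ kˣ ⧸ GWIdeal k

/-- `⟨a⟩`: the class in `W = ℤ[k^×]/R` of the basis element of `a ∈ k^×`. -/
def gw {k : Type*} [Field k] (a : kˣ) : GW k :=
  Ideal.Quotient.mk (GWIdeal k) (MonoidAlgebra.of ℤ kˣ a)

/-- `t_a := ⟨2⟩ + ⟨a⟩ − ⟨1⟩ − ⟨2a⟩ ∈ W` (for `k` of characteristic `≠ 2`, so that
`2` is a unit of `k`). -/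
def tGW {k : Type*} [Field k] (h2 : (2 : k) ≠ 0) (a : kˣ) : GW k :=
  gw (Units.mk0 (2 : k) h2) + gw a - gw 1 - gw (Units.mk0 (2 : k) h2 * a)

end

section auxiliary

variable {k : Type*} [Field k]

lemma gw_eq {a b : kˣ} (h : a = b) : gw a = gw b := by rw [h]

lemma gw_mul (a b : kˣ) : gw a * gw b = gw (a * b) := by
  simp [gw, ← map_mul]

lemma gw_sq (a b : kˣ) : gw (a * b ^ 2) = gw a := by
  unfold gw
  rw [Ideal.Quotient.eq]
  have h : MonoidAlgebra.of ℤ kˣ a - MonoidAlgebra.of ℤ kˣ (a * b ^ 2) ∈ GWIdeal k :=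
    Ideal.subset_span (Or.inl ⟨a, b, rfl⟩)
  have h' := (GWIdeal k).neg_mem h
  simpa [neg_sub] using h'

lemma gw_rel (a b c : kˣ) (h : (c : k) = (a : k) + (b : k)) :
    gw a + gw b = gw c + gw (c * a * b) := by
  unfold gw
  rw [← map_add (Ideal.Quotient.mk (GWIdeal k)), ← map_add (Ideal.Quotient.mk (GWIdeal k)),
    Ideal.Quotient.eq]
  have h' : MonoidAlgebra.of ℤ kˣ a + MonoidAlgebra.of ℤ kˣ b
      - MonoidAlgebra.of ℤ kˣ c - MonoidAlgebra.of ℤ kˣ (c * a * b) ∈ GWIdeal k :=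
    Ideal.subset_span (Or.inr ⟨a, b, c, h, rfl⟩)
  convert h' using 1
  ring

lemma gw_double (h2 : (2 : k) ≠ 0) (x : kˣ) :
    gw x + gw x = gw (Units.mk0 (2 : k) h2 * x) + gw (Units.mk0 (2 : k) h2 * x) := by
  have h := gw_rel x x (Units.mk0 (2 : k) h2 * x)
    (by rw [Units.val_mul, Units.val_mk0, two_mul])
  rwa [show Units.mk0 (2 : k) h2 * x * x * x = Units.mk0 (2 : k) h2 * x * x ^ 2 by
    rw [mul_assoc, ← sq], gw_sq] at h

end auxiliary

/-- For all `a, b, c ∈ k^×`, `⟨c⟩·(t_a + t_b) = t_{ac} + t_{bc}` in `W`; in particular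
`⟨a⟩·t_a = t_a` and `⟨a⟩·t_b + ⟨b⟩·t_a = t_a + t_b`. -/
theorem gw_mul_tGW_add {k : Type*} [Field k] (h2 : (2 : k) ≠ 0) :
    (∀ a b c : kˣ, gw c * (tGW h2 a + tGW h2 b) = tGW h2 (a * c) + tGW h2 (b * c)) ∧
    (∀ a : kˣ, gw a * tGW h2 a = tGW h2 a) ∧
    (∀ a b : kˣ, gw a * tGW h2 b + gw b * tGW h2 a = tGW h2 a + tGW h2 b) := by
  set u : kˣ := Units.mk0 (2 : k) h2 with hu
  have d1' : gw (1 : kˣ) + gw 1 = gw u + gw u := by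
    have h := gw_double h2 (1 : kˣ)
    rw [mul_one, ← hu] at h
    exact h
  refine ⟨?_, ?_, ?_⟩
  · intro a b c
    have hcu : gw c * gw u = gw (u * c) := (gw_mul c u).trans (gw_eq (mul_comm c u))
    have hca : gw c * gw a = gw (a * c) := (gw_mul c a).trans (gw_eq (mul_comm c a))
    have hcb : gw c * gw b = gw (b * c) := (gw_mul c b).trans (gw_eq (mul_comm c b))
    have hc1 : gw c * gw (1 : kˣ) = gw c := (gw_mul c 1).trans (gw_eq (mul_one c))
    have hcua : gw c * gw (u * a) = gw (u * (a * c)) :=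
      (gw_mul c (u * a)).trans (gw_eq (by rw [mul_left_comm, mul_comm a c]))
    have hcub : gw c * gw (u * b) = gw (u * (b * c)) :=
      (gw_mul c (u * b)).trans (gw_eq (by rw [mul_left_comm, mul_comm b c]))
    have dc := gw_double h2 c
    rw [← hu] at dc
    simp only [tGW, ← hu]
    linear_combination 2 * hcu + hca + hcb - 2 * hc1 - hcua - hcub - dc + d1'
  · intro a
    have hau : gw a * gw u = gw (u * a) := (gw_mul a u).trans (gw_eq (mul_comm a u))
    have haa : gw a * gw a = gw (1 : kˣ) := by
      rw [gw_mul, show a * a = 1 * a ^ 2 by rw [one_mul, sq], gw_sq]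
    have ha1 : gw a * gw (1 : kˣ) = gw a := (gw_mul a 1).trans (gw_eq (mul_one a))
    have haua : gw a * gw (u * a) = gw u := by
      rw [gw_mul, show a * (u * a) = u * a ^ 2 by rw [mul_left_comm, sq], gw_sq]
    have da := gw_double h2 a
    rw [← hu] at da
    simp only [tGW, ← hu]
    linear_combination hau + haa - ha1 - haua - da + d1'
  · intro a b
    have hau : gw a * gw u = gw (u * a) := (gw_mul a u).trans (gw_eq (mul_comm a u))
    have hbu : gw b * gw u = gw (u * b) := (gw_mul b u).trans (gw_eq (mul_comm b u))
    have hab : gw a * gw b = gw (a * b) := gw_mul a b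
    have hba : gw b * gw a = gw (a * b) := (gw_mul b a).trans (gw_eq (mul_comm b a))
    have ha1 : gw a * gw (1 : kˣ) = gw a := (gw_mul a 1).trans (gw_eq (mul_one a))
    have hb1 : gw b * gw (1 : kˣ) = gw b := (gw_mul b 1).trans (gw_eq (mul_one b))
    have haub : gw a * gw (u * b) = gw (u * (a * b)) :=
      (gw_mul a (u * b)).trans (gw_eq (mul_left_comm a u b))
    have hbua : gw b * gw (u * a) = gw (u * (a * b)) :=
      (gw_mul b (u * a)).trans (gw_eq (by rw [mul_left_comm, mul_comm b a]))
    have da := gw_double h2 a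
    have db := gw_double h2 b
    have dab := gw_double h2 (a * b)
    rw [← hu] at da db dab
    simp only [tGW, ← hu]
    linear_combination hau + hab - ha1 - haub + hbu + hba - hb1 - hbua - da - db + dab + d1'
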